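/- Let f be convex differentiable with λ > 0 and x* ∈ R^n satisfy (∇f(x*))_i = 0 for all i ∉ I(x*), where I(x*) = {i : x*_i = 0}. Define the neighborhood U = {Δx : ‖Δx‖_∞ < (1/2) min_{i∈I(x*)} min(λ/|(∇f(x*))_i|, 1), and |Δx_i| < |x*_i| for all i ∉ I(x*)}. Then for every Δx ∈ U, f(x*+Δx) + λ‖x*+Δx‖₀ ≥ f(x*) + λ‖x*‖₀. -/

import Mathlib

open scoped Classical

lemma convex_grad_ineq {n : ℕ} (f : EuclideanSpace ℝ (Fin n) → ℝ)
    (hconv : ConvexOn ℝ Set.univ f) (x g y : EuclideanSpace ℝ (Fin n))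
    (hf : HasGradientAt f g x) :
    f x + inner ℝ g (y - x) ≤ f y := by
  set φ : ℝ → ℝ := fun t => f (t • (y - x) + x) with hφ
  have hfd : HasFDerivAt f ((InnerProductSpace.toDual ℝ (EuclideanSpace ℝ (Fin n))) g)
      ((0:ℝ) • (y - x) + x) := by simpa using hf.hasFDerivAt
  have hL0 : HasDerivAt (fun t : ℝ => (t : ℝ) • (y - x) + x) (y - x) 0 := by
    simpa using ((hasDerivAt_id (0:ℝ)).smul_const (y - x)).add_const x
  have hd : HasDerivAt φ (inner ℝ g (y - x) : ℝ) 0 := by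
    have h := hfd.comp_hasDerivAt 0 hL0
    simp only [InnerProductSpace.toDual_apply_apply] at h
    exact h
  have hφc : ConvexOn ℝ Set.univ φ := by
    have := hconv.comp_affineMap (AffineMap.lineMap x y)
    have e : f ∘ AffineMap.lineMap x y = φ := funext fun t => by simp [φ, AffineMap.lineMap_apply]
    rw [Set.preimage_univ, e] at this
    exact this
  have hsl := hφc.le_slope_of_hasDerivAt (Set.mem_univ (0:ℝ)) (Set.mem_univ (1:ℝ))
    one_pos hd
  have hs : slope φ 0 1 = f y - f x := by
    simp [slope_def_field, φ]
  rw [hs] at hsl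
  linarith

/-- `‖x‖₀`: the number of nonzero components of `x`. -/
noncomputable def norm0 {n : ℕ} (x : EuclideanSpace ℝ (Fin n)) : ℕ :=
  (Finset.univ.filter fun i => x i ≠ 0).card

theorem local_min_on_neighborhood {n : ℕ}
    (f : EuclideanSpace ℝ (Fin n) → ℝ)
    (gradf : EuclideanSpace ℝ (Fin n) → EuclideanSpace ℝ (Fin n))
    (hconv : ConvexOn ℝ Set.univ f)
    (hf : ∀ z, HasGradientAt f (gradf z) z)
    (lam : ℝ) (hlam : 0 < lam)
    (xs : EuclideanSpace ℝ (Fin n))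
    -- the gradient vanishes on the support of x*
    (hgrad : ∀ i : Fin n, xs i ≠ 0 → gradf xs i = 0)
    (Δx : EuclideanSpace ℝ (Fin n))
    -- ‖Δx‖_∞ < (1/2) min_{i ∈ I(x*)} min(λ/|(∇f(x*))_i|, 1), with λ/0 read as +∞
    (hU1 : ∀ j i : Fin n, xs i = 0 →
      |Δx j| < 1 / 2 * (if gradf xs i = 0 then 1 else min (lam / |gradf xs i|) 1))
    -- |Δx_i| < |x*_i| for all i ∉ I(x*)
    (hU2 : ∀ i : Fin n, xs i ≠ 0 → |Δx i| < |xs i|) :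
    f xs + lam * (norm0 xs : ℝ) ≤ f (xs + Δx) + lam * (norm0 (xs + Δx) : ℝ) := by
  set g := gradf xs with hg
  -- first-order convexity inequality
  have h1 : f xs + inner ℝ g Δx ≤ f (xs + Δx) := by
    have := convex_grad_ineq f hconv xs g (xs + Δx) (hf xs)
    simpa using this
  -- the inner product as a sum
  have hsum : (inner ℝ g Δx : ℝ) = ∑ i : Fin n, g i * Δx i := by
    rw [PiLp.inner_apply]; simp [RCLike.inner_apply, mul_comm]
  set S : Finset (Fin n) := Finset.univ.filter fun i => xs i = 0 ∧ Δx i ≠ 0 with hS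
  -- termwise lower bound
  have h2 : -(lam * S.card) ≤ (inner ℝ g Δx : ℝ) := by
    rw [hsum]
    have : ∑ i : Fin n, (if i ∈ S then -lam else 0) ≤ ∑ i : Fin n, g i * Δx i := by
      apply Finset.sum_le_sum
      intro i _
      by_cases hxi : xs i = 0
      · by_cases hdi : Δx i = 0
        · simp [hS, hxi, hdi, le_of_lt hlam]
        · have hiS : i ∈ S := by simp [hS, hxi, hdi]
          simp only [hiS, if_pos]
          by_cases hgi : g i = 0
          · simp [hgi]; linarith
          · have hb := hU1 i i hxi
            rw [if_neg hgi] at hb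
            have hgpos : 0 < |g i| := abs_pos.mpr hgi
            have : |Δx i| < lam / |g i| := by
              have : (1:ℝ)/2 * min (lam / |g i|) 1 ≤ lam / |g i| := by
                have h3 : min (lam / |g i|) 1 ≤ lam / |g i| := min_le_left _ _
                have h4 : 0 ≤ min (lam / |g i|) 1 :=
                  le_min (le_of_lt (div_pos hlam hgpos)) zero_le_one
                linarith
              linarith
            have habs : |g i * Δx i| < lam := by
              rw [abs_mul]
              calc |g i| * |Δx i| < |g i| * (lam / |g i|) := by
                    exact mul_lt_mul_of_pos_left this hgpos
                _ = lam := by field_simp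
            have := neg_abs_le (g i * Δx i)
            linarith [abs_nonneg (g i * Δx i)]
      · have hgi : g i = 0 := hgrad i hxi
        have hiS : i ∉ S := by simp [hS, hxi]
        simp [hiS, hgi]
    calc -(lam * S.card) = ∑ i : Fin n, (if i ∈ S then -lam else 0) := by
          rw [Finset.sum_ite_mem, Finset.univ_inter, Finset.sum_const]
          simp [mul_comm]
      _ ≤ _ := this
  -- cardinality bound
  have h3 : (norm0 xs : ℝ) + S.card ≤ (norm0 (xs + Δx) : ℝ) := by
    have hcard : norm0 xs + S.card ≤ norm0 (xs + Δx) := by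
      set A : Finset (Fin n) := Finset.univ.filter fun i => xs i ≠ 0 with hA
      have hdisj : Disjoint A S := by
        rw [Finset.disjoint_left]
        intro i hiA hiS
        simp [hA] at hiA
        simp [hS] at hiS
        exact hiA hiS.1
      have hsub : A ∪ S ⊆ Finset.univ.filter fun i => (xs + Δx) i ≠ 0 := by
        intro i hi
        rcases Finset.mem_union.mp hi with hi | hi
        · simp [hA] at hi
          have h5 := hU2 i hi
          have : xs i + Δx i ≠ 0 := by
            intro hc
            have : Δx i = -xs i := by linarith [hc]
            rw [this, abs_neg] at h5
            exact lt_irrefl _ h5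
          exact Finset.mem_filter.mpr ⟨Finset.mem_univ _, by simpa [PiLp.add_apply] using this⟩
        · simp [hS] at hi
          have : xs i + Δx i ≠ 0 := by
            rw [hi.1, zero_add]; exact hi.2
          exact Finset.mem_filter.mpr ⟨Finset.mem_univ _, by simpa [PiLp.add_apply] using this⟩
      calc norm0 xs + S.card = (A ∪ S).card := by
            rw [Finset.card_union_of_disjoint hdisj]; rfl
        _ ≤ norm0 (xs + Δx) := Finset.card_le_card hsub
    exact_mod_cast hcard
  have h4 : lam * ((norm0 xs : ℝ) + S.card) ≤ lam * (norm0 (xs + Δx) : ℝ) :=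
    mul_le_mul_of_nonneg_left h3 (le_of_lt hlam)
  nlinarith [h1, h2, h4]
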